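/- For every forest F (a simple graph without cycles), the unordered hypergraph extremal function satisfies ex_e^u(F,n) = O(n): there is a constant C = C(F) such that every simple hypergraph H on at most n vertices not containing F (in the unordered sense) has at most C·n edges. -/

import Mathlib

/-- Vertex set, weight, and simplicity of a hypergraph given as a list of finite edges. -/
def vset (H : List (Finset ℕ)) : Finset ℕ := H.foldr (· ∪ ·) ∅

def nv (H : List (Finset ℕ)) : ℕ := (vset H).card

def HSimple (H : List (Finset ℕ)) : Prop := H.Nodup ∧ ∀ E ∈ H, E.Nonempty

/-- Unordered containment of a graph `F` in a hypergraph `H`: an injection `φ` of vertices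
and an injection `ψ` of edges such that both endpoints of each edge of `F` land in the
corresponding edge of `H`. -/
def ContainsU {V : Type*} (H : List (Finset ℕ)) (F : SimpleGraph V) : Prop :=
  ∃ (φ : V → ℕ) (ψ : Sym2 V → Fin H.length),
    Function.Injective φ ∧ Set.InjOn ψ F.edgeSet ∧
    ∀ e ∈ F.edgeSet, ∀ x ∈ e, φ x ∈ H.get (ψ e)

open SimpleGraph

section Aux

/-- Every finite acyclic graph with an edge has a leaf. -/
lemma exists_leaf' {V : Type*} [Fintype V] (F : SimpleGraph V) (hF : F.IsAcyclic)
    (hne : F.edgeSet.Nonempty) : ∃ u v, F.Adj u v ∧ ∀ w, F.Adj v w → w = u := by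
  classical
  set L : Set ℕ := {ℓ | ∃ (u : V) (v : V) (p : F.Walk u v), p.IsPath ∧ p.length = ℓ} with hL
  obtain ⟨e, he⟩ := hne
  induction e with
  | _ x y =>
  have hxy : F.Adj x y := he
  have hLne : L.Nonempty := ⟨1, x, y, Walk.cons hxy Walk.nil, by simp [hxy.ne], by simp⟩
  have hbdd : BddAbove L := by
    refine ⟨Fintype.card V, fun ℓ hℓ => ?_⟩
    obtain ⟨u, v, p, hp, rfl⟩ := hℓ
    exact le_of_lt hp.length_lt
  have hmem : sSup L ∈ L := Nat.sSup_mem hLne hbdd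
  obtain ⟨u, v, p, hp, hplen⟩ := hmem
  have hone : 1 ≤ p.length := by
    rw [hplen]
    exact le_csSup hbdd ⟨x, y, Walk.cons hxy Walk.nil, by simp [hxy.ne], by simp⟩
  cases p with
  | nil => simp at hone
  | cons h q =>
    rename_i z
    rw [Walk.cons_isPath_iff] at hp
    refine ⟨z, u, h.symm, fun w hw => ?_⟩
    by_contra hwz
    by_cases hws : w ∈ q.support
    · -- w on the path beyond u: creates a cycle
      have hq' : (q.takeUntil w hws).IsPath := hp.1.takeUntil hws
      have hcyc : (Walk.cons hw.symm (Walk.cons h (q.takeUntil w hws))).IsCycle := by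
        rw [Walk.cons_isCycle_iff]
        constructor
        · rw [Walk.cons_isPath_iff]
          exact ⟨hq', fun hu => hp.2 (Walk.support_takeUntil_subset _ hws hu)⟩
        · intro hmem
          rw [Walk.edges_cons, List.mem_cons] at hmem
          rcases hmem with hmem | hmem
          · rw [Sym2.eq_iff] at hmem
            rcases hmem with ⟨h1, h2⟩ | ⟨h1, h2⟩
            · exact hw.ne' h1
            · exact hwz h1
          · exact hp.2 (Walk.support_takeUntil_subset _ hws
              ((q.takeUntil w hws).snd_mem_support_of_mem_edges hmem))
      exact hF _ hcyc
    · -- w off the path: extend the path, contradicting maximality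
      have hws' : w ∉ (Walk.cons h q).support := by
        rw [Walk.support_cons, List.mem_cons]
        push_neg
        exact ⟨hw.ne', hws⟩
      have hpath : (Walk.cons hw.symm (Walk.cons h q)).IsPath := by
        rw [Walk.cons_isPath_iff]
        exact ⟨by rw [Walk.cons_isPath_iff]; exact hp, hws'⟩
      have : (Walk.cons hw.symm (Walk.cons h q)).length ∈ L :=
        ⟨_, _, _, hpath, rfl⟩
      have hle := le_csSup hbdd this
      rw [Walk.length_cons] at hle
      omega

/-- Degree of a vertex in a hypergraph given as a finset of edges. -/
def hdeg (B : Finset (Finset ℕ)) (a : ℕ) : ℕ := (B.filter (fun E => a ∈ E)).card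

/-- Cleaning lemma: passing to a subhypergraph of large minimum degree. -/
lemma cleaning (D : ℕ) : ∀ (n : ℕ) (A : Finset (Finset ℕ)), (A.biUnion id).card ≤ n →
    ∃ B ⊆ A, A.card ≤ B.card + D * n ∧ ∀ a ∈ B.biUnion id, D ≤ hdeg B a := by
  intro n
  induction n using Nat.strong_induction_on with
  | _ n ih =>
  intro A hA
  by_cases h : ∀ a ∈ A.biUnion id, D ≤ hdeg A a
  · exact ⟨A, Finset.Subset.refl A, Nat.le_add_right _ _, h⟩
  · push_neg at h
    obtain ⟨a, ha, hd⟩ := h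
    have hn1 : 1 ≤ n := le_trans (Finset.card_pos.mpr ⟨a, ha⟩) hA
    set A' := A.filter (fun E => a ∉ E) with hA'
    have hsub : A'.biUnion id ⊆ (A.biUnion id).erase a := by
      intro x hx
      rw [Finset.mem_biUnion] at hx
      obtain ⟨E, hE, hxE⟩ := hx
      rw [Finset.mem_filter] at hE
      refine Finset.mem_erase.mpr ⟨fun hxa => hE.2 (hxa ▸ hxE), ?_⟩
      exact Finset.mem_biUnion.mpr ⟨E, hE.1, hxE⟩
    have hcard : (A'.biUnion id).card ≤ n - 1 := by
      have h1 := Finset.card_le_card hsub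
      have h2 := Finset.card_erase_of_mem ha
      omega
    obtain ⟨B, hBA', h1, h2⟩ := ih (n - 1) (by omega) A' hcard
    refine ⟨B, hBA'.trans (Finset.filter_subset _ _), ?_, h2⟩
    have hsplit : A'.card + hdeg A a = A.card := by
      have h := Finset.card_filter_add_card_filter_not (s := A)
        (p := fun E => a ∈ E)
      beta_reduce at h
      unfold hdeg
      rw [hA']
      omega
    have hmul : D * (n - 1) + D = D * n := by
      cases n with
      | zero => omega
      | succ t => simp [Nat.mul_succ]
    omega

lemma mem_vset' {H : List (Finset ℕ)} {x : ℕ} : x ∈ vset H ↔ ∃ E ∈ H, x ∈ E := by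
  induction H with
  | nil => simp [vset]
  | cons E t ih =>
    show x ∈ E ∪ vset t ↔ _
    rw [Finset.mem_union, ih]
    simp

lemma mem_support_of_mem_edge {V : Type*} {G : SimpleGraph V} {e : Sym2 V} {x : V}
    (he : e ∈ G.edgeSet) (hx : x ∈ e) : x ∈ G.support := by
  induction e with
  | _ a b =>
    rw [SimpleGraph.mem_edgeSet] at he
    rcases Sym2.mem_iff.mp hx with rfl | rfl
    · exact (SimpleGraph.mem_support _).mpr ⟨b, he⟩
    · exact (SimpleGraph.mem_support _).mpr ⟨a, he.symm⟩

/-- Extending an injection on a subset of a finite type to a global injection into ℕ. -/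
lemma extend_inj {V : Type*} [Fintype V] (s : Set V) (φ : V → ℕ) (h : Set.InjOn φ s) :
    ∃ g : V → ℕ, Function.Injective g ∧ ∀ x ∈ s, g x = φ x := by
  classical
  obtain ⟨h0, hinj0⟩ := Countable.exists_injective_nat V
  set M := (Finset.univ.sup φ) + 1 with hM
  refine ⟨fun x => if x ∈ s then φ x else M + h0 x, ?_, fun x hx => by simp [hx]⟩
  intro x y hxy
  by_cases hx : x ∈ s <;> by_cases hy : y ∈ s <;> simp only [hx, hy, if_pos, if_neg,
    if_true, if_false] at hxy
  · exact h hx hy hxy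
  · exfalso
    have : φ x ≤ Finset.univ.sup φ := Finset.le_sup (Finset.mem_univ x)
    omega
  · exfalso
    have : φ y ≤ Finset.univ.sup φ := Finset.le_sup (Finset.mem_univ y)
    omega
  · exact hinj0 (by omega)

/-- Greedy embedding of a forest into a hypergraph of large minimum degree. -/
lemma embed {V : Type*} [Fintype V] (k n : ℕ) (B : Finset (Finset ℕ))
    (hdegB : ∀ a ∈ B.biUnion id, k + 2 ^ (2 * k) + 1 ≤ hdeg B a)
    (hBcard : 2 ^ (2 * k) * (n + 1) + k < B.card)
    (hBn : (B.biUnion id).card ≤ n) :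
    ∀ (m : ℕ) (F : SimpleGraph V), F.IsAcyclic → F.edgeSet.ncard ≤ m →
      F.edgeSet.ncard ≤ k →
    ∃ (U : Finset ℕ) (W : Finset (Finset ℕ)) (φ : V → ℕ) (ψ : Sym2 V → Finset ℕ),
      U.card ≤ 2 * F.edgeSet.ncard ∧ W ⊆ B ∧ W.card ≤ F.edgeSet.ncard ∧
      Set.InjOn φ F.support ∧ (∀ x ∈ F.support, φ x ∈ U) ∧
      Set.InjOn ψ F.edgeSet ∧ (∀ e ∈ F.edgeSet, ψ e ∈ W) ∧
      (∀ e ∈ F.edgeSet, ∀ x ∈ e, φ x ∈ ψ e) := by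
  classical
  intro m
  induction m with
  | zero =>
    intro F hac hm hk
    have h0 : F.edgeSet.ncard = 0 := Nat.le_zero.mp hm
    have hE : F.edgeSet = ∅ := (Set.ncard_eq_zero).mp h0
    have hsupp : ∀ x : V, x ∉ F.support := by
      intro x hx
      obtain ⟨y, hy⟩ := (SimpleGraph.mem_support _).mp hx
      have : s(x, y) ∈ F.edgeSet := hy
      rw [hE] at this
      exact Set.notMem_empty _ this
    refine ⟨∅, ∅, fun _ => 0, fun _ => ∅, by simp, Finset.empty_subset _, by simp,
      fun x hx => (hsupp x hx).elim, fun x hx => (hsupp x hx).elim,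
      fun e he => by rw [hE] at he; exact he.elim,
      fun e he => by rw [hE] at he; exact he.elim,
      fun e he => by rw [hE] at he; exact he.elim⟩
  | succ m ih =>
    intro F hac hm hk
    by_cases h0 : F.edgeSet.ncard = 0
    · exact ih F hac (by omega) hk
    have hne : F.edgeSet.Nonempty := Set.nonempty_of_ncard_ne_zero h0
    obtain ⟨u, v, huv, hleaf⟩ := exists_leaf' F hac hne
    set P := 2 ^ (2 * k) with hP
    set F' := F.deleteEdges {s(u, v)} with hF'def
    have hle : F' ≤ F := SimpleGraph.deleteEdges_le _
    have hac' : F'.IsAcyclic := fun w c hc => hac (c.mapLe hle) (hc.mapLe hle)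
    have hes : F'.edgeSet = F.edgeSet \ {s(u, v)} := SimpleGraph.edgeSet_deleteEdges _
    have hmemE : s(u, v) ∈ F.edgeSet := huv
    have hnotmem : s(u, v) ∉ F'.edgeSet := by rw [hes]; simp
    have hcard' : F'.edgeSet.ncard = F.edgeSet.ncard - 1 := by
      rw [hes]; exact Set.ncard_diff_singleton_of_mem hmemE
    have hins : F.edgeSet = insert s(u, v) F'.edgeSet := by
      rw [hes, Set.insert_diff_singleton, Set.insert_eq_self.mpr hmemE]
    have huvne : u ≠ v := huv.ne
    have hv' : v ∉ F'.support := by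
      intro hv
      obtain ⟨w, hw⟩ := (SimpleGraph.mem_support _).mp hv
      rw [hF'def, SimpleGraph.deleteEdges_adj] at hw
      have hwu := hleaf w hw.1
      subst hwu
      exact hw.2 (by rw [Sym2.eq_swap]; rfl)
    have hsupcase : ∀ x ∈ F.support, x ∈ F'.support ∨ x = u ∨ x = v := by
      intro x hx
      obtain ⟨y, hy⟩ := (SimpleGraph.mem_support _).mp hx
      by_cases hxy : s(x, y) = s(u, v)
      · rw [Sym2.eq_iff] at hxy
        rcases hxy with ⟨h1, _⟩ | ⟨h1, _⟩
        · exact Or.inr (Or.inl h1)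
        · exact Or.inr (Or.inr h1)
      · left
        exact (SimpleGraph.mem_support _).mpr ⟨y, by
          rw [hF'def, SimpleGraph.deleteEdges_adj]
          exact ⟨hy, by simpa using hxy⟩⟩
    have hF'sub : ∀ e ∈ F'.edgeSet, e ∈ F.edgeSet := fun e he => by
      rw [hes] at he; exact he.1
    obtain ⟨U, W, φ', ψ', hU, hWB, hW, hinjφ, hφU, hinjψ, hψW, hcover⟩ :=
      ih F' hac' (by omega) (by omega)
    have hxsupp' : ∀ e ∈ F'.edgeSet, ∀ x ∈ e, x ∈ F'.support :=
      fun e he x hx => mem_support_of_mem_edge he hx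
    by_cases hu : u ∈ F'.support
    · -- Case 1: u is already embedded
      obtain ⟨y, hy⟩ := (SimpleGraph.mem_support _).mp hu
      have hey : s(u, y) ∈ F'.edgeSet := hy
      have haB : φ' u ∈ B.biUnion id :=
        Finset.mem_biUnion.mpr ⟨ψ' s(u, y), hWB (hψW _ hey),
          hcover _ hey u (Sym2.mem_mk_left u y)⟩
      have hdega := hdegB _ haB
      have hbad : ¬ (B.filter (fun E => φ' u ∈ E) ⊆ W ∪ (insert (φ' u) U).powerset) := by
        intro hsubs
        have h1 := Finset.card_le_card hsubs
        have h2 := Finset.card_union_le W (insert (φ' u) U).powerset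
        have h3 : (insert (φ' u) U).powerset.card ≤ P := by
          rw [Finset.card_powerset, hP]
          refine Nat.pow_le_pow_right (by norm_num) ?_
          have := Finset.card_insert_le (φ' u) U
          omega
        have h4 : (B.filter (fun E => φ' u ∈ E)).card = hdeg B (φ' u) := rfl
        omega
      obtain ⟨E, hEfilt, hEbad⟩ := Finset.not_subset.mp hbad
      rw [Finset.mem_filter] at hEfilt
      rw [Finset.mem_union, not_or] at hEbad
      obtain ⟨hEW, hEpow⟩ := hEbad
      rw [Finset.mem_powerset] at hEpow
      obtain ⟨b, hbE, hbIns⟩ := Finset.not_subset.mp hEpow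
      have hbU : b ∉ U := fun hh => hbIns (Finset.mem_insert_of_mem hh)
      have hba : b ≠ φ' u := fun hh => hbIns (hh ▸ Finset.mem_insert_self _ U)
      set φ := Function.update φ' v b with hφdef
      set ψ := Function.update ψ' s(u, v) E with hψdef
      have hval : ∀ x ∈ F.support, (x ≠ v ∧ x ∈ F'.support ∧ φ x = φ' x) ∨
          (x = v ∧ φ x = b) := by
        intro x hx
        by_cases hxv : x = v
        · exact Or.inr ⟨hxv, by rw [hφdef, hxv, Function.update_self]⟩
        · rcases hsupcase x hx with h | h | h
          · exact Or.inl ⟨hxv, h, by rw [hφdef, Function.update_of_ne hxv]⟩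
          · exact Or.inl ⟨hxv, h ▸ hu, by rw [hφdef, Function.update_of_ne hxv]⟩
          · exact absurd h hxv
      refine ⟨insert b (insert (φ' u) U), insert E W, φ, ψ, ?_, ?_, ?_, ?_, ?_, ?_, ?_, ?_⟩
      · have h1 := Finset.card_insert_le b (insert (φ' u) U)
        have h2 := Finset.card_insert_le (φ' u) U
        omega
      · exact Finset.insert_subset_iff.mpr ⟨hEfilt.1, hWB⟩
      · have := Finset.card_insert_le E W
        omega
      · intro x hx y hy hxy
        rcases hval x hx with ⟨hx1, hx2, hx3⟩ | ⟨hx1, hx3⟩ <;>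
          rcases hval y hy with ⟨hy1, hy2, hy3⟩ | ⟨hy1, hy3⟩
        · exact hinjφ hx2 hy2 (by rw [← hx3, ← hy3, hxy])
        · exfalso; apply hbU; rw [← hy3, ← hxy, hx3]; exact hφU x hx2
        · exfalso; apply hbU; rw [← hx3, hxy, hy3]; exact hφU y hy2
        · rw [hx1, hy1]
      · intro x hx
        rcases hval x hx with ⟨_, hx2, hx3⟩ | ⟨_, hx3⟩
        · rw [hx3]; exact Finset.mem_insert_of_mem (Finset.mem_insert_of_mem (hφU x hx2))
        · rw [hx3]; exact Finset.mem_insert_self _ _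
      · intro e1 he1 e2 he2 heq
        by_cases h1 : e1 = s(u, v) <;> by_cases h2 : e2 = s(u, v)
        · rw [h1, h2]
        · exfalso
          have he2' : e2 ∈ F'.edgeSet := by
            rw [hins] at he2; rcases he2 with h | h; exact absurd h h2; exact h
          rw [hψdef, h1, Function.update_self, Function.update_of_ne h2] at heq
          exact hEW (heq ▸ hψW e2 he2')
        · exfalso
          have he1' : e1 ∈ F'.edgeSet := by
            rw [hins] at he1; rcases he1 with h | h; exact absurd h h1; exact h
          rw [hψdef, h2, Function.update_self, Function.update_of_ne h1] at heq
          exact hEW (heq ▸ hψW e1 he1')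
        · have he1' : e1 ∈ F'.edgeSet := by
            rw [hins] at he1; rcases he1 with h | h; exact absurd h h1; exact h
          have he2' : e2 ∈ F'.edgeSet := by
            rw [hins] at he2; rcases he2 with h | h; exact absurd h h2; exact h
          rw [hψdef, Function.update_of_ne h1, Function.update_of_ne h2] at heq
          exact hinjψ he1' he2' heq
      · intro e he
        by_cases h1 : e = s(u, v)
        · rw [hψdef, h1, Function.update_self]; exact Finset.mem_insert_self _ _
        · have he' : e ∈ F'.edgeSet := by
            rw [hins] at he; rcases he with h | h; exact absurd h h1; exact h
          rw [hψdef, Function.update_of_ne h1]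
          exact Finset.mem_insert_of_mem (hψW e he')
      · intro e he x hx
        by_cases h1 : e = s(u, v)
        · subst h1
          rw [hψdef, Function.update_self]
          rcases Sym2.mem_iff.mp hx with rfl | rfl
          · rw [hφdef, Function.update_of_ne huvne]; exact hEfilt.2
          · rw [hφdef, Function.update_self]; exact hbE
        · have he' : e ∈ F'.edgeSet := by
            rw [hins] at he; rcases he with h | h; exact absurd h h1; exact h
          have hxs : x ∈ F'.support := hxsupp' e he' x hx
          have hxv : x ≠ v := fun hh => hv' (hh ▸ hxs)
          rw [hψdef, Function.update_of_ne h1, hφdef, Function.update_of_ne hxv]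
          exact hcover e he' x hx
    · -- Case 2: u is fresh; find an edge with two fresh vertices
      have hu' : u ∉ F'.support := hu
      set X := insert (∅ : Finset ℕ) ((B.biUnion id).image fun x => ({x} : Finset ℕ))
        with hX
      have hBadcard : (B.filter (fun E => (E \ U).card ≤ 1)).card ≤ P * (n + 1) := by
        have hmaps : ∀ E ∈ B.filter (fun E => (E \ U).card ≤ 1),
            (E ∩ U, E \ U) ∈ U.powerset ×ˢ X := by
          intro E hE
          rw [Finset.mem_filter] at hE
          rw [Finset.mem_product]
          refine ⟨Finset.mem_powerset.mpr Finset.inter_subset_right, ?_⟩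
          rcases Nat.le_one_iff_eq_zero_or_eq_one.mp hE.2 with h | h
          · rw [Finset.card_eq_zero] at h
            rw [hX, h]
            exact Finset.mem_insert_self _ _
          · obtain ⟨x, hx⟩ := Finset.card_eq_one.mp h
            have hxE : x ∈ E := (Finset.mem_sdiff.mp (hx ▸ Finset.mem_singleton_self x)).1
            rw [hX, hx]
            exact Finset.mem_insert_of_mem (Finset.mem_image.mpr
              ⟨x, Finset.mem_biUnion.mpr ⟨E, hE.1, hxE⟩, rfl⟩)
        have hinj : Set.InjOn (fun E => (E ∩ U, E \ U))
            (B.filter (fun E => (E \ U).card ≤ 1)) := by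
          intro E1 _ E2 _ hEq
          have h1 : E1 ∩ U = E2 ∩ U := congrArg Prod.fst hEq
          have h2 : E1 \ U = E2 \ U := congrArg Prod.snd hEq
          rw [← Finset.sdiff_union_inter E1 U, ← Finset.sdiff_union_inter E2 U, h1, h2]
        have hcle := Finset.card_le_card_of_injOn _ hmaps hinj
        have hXcard : X.card ≤ n + 1 := by
          refine le_trans (Finset.card_insert_le _ _) ?_
          have := Finset.card_image_le (s := B.biUnion id)
            (f := fun x => ({x} : Finset ℕ))
          omega
        have hprod : (U.powerset ×ˢ X).card ≤ P * (n + 1) := by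
          rw [Finset.card_product, Finset.card_powerset]
          refine Nat.mul_le_mul ?_ hXcard
          rw [hP]
          exact Nat.pow_le_pow_right (by norm_num) (by omega)
        omega
      have hnot : ¬ (B ⊆ W ∪ B.filter (fun E => (E \ U).card ≤ 1)) := by
        intro hsubs
        have h1 := Finset.card_le_card hsubs
        have h2 := Finset.card_union_le W (B.filter (fun E => (E \ U).card ≤ 1))
        omega
      obtain ⟨E, hEB, hEnot⟩ := Finset.not_subset.mp hnot
      rw [Finset.mem_union, not_or] at hEnot
      obtain ⟨hEW, hEBad⟩ := hEnot
      have h2le : 2 ≤ (E \ U).card := by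
        by_contra hh
        exact hEBad (Finset.mem_filter.mpr ⟨hEB, by omega⟩)
      have h1lt : 1 < (E \ U).card := by omega
      obtain ⟨a, ha, b, hb, hab⟩ := Finset.one_lt_card.mp h1lt
      have haE := (Finset.mem_sdiff.mp ha).1
      have haU := (Finset.mem_sdiff.mp ha).2
      have hbE := (Finset.mem_sdiff.mp hb).1
      have hbU := (Finset.mem_sdiff.mp hb).2
      set φ := Function.update (Function.update φ' u a) v b with hφdef
      set ψ := Function.update ψ' s(u, v) E with hψdef
      have hval : ∀ x ∈ F.support, (x ∈ F'.support ∧ φ x = φ' x) ∨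
          (x = u ∧ φ x = a) ∨ (x = v ∧ φ x = b) := by
        intro x hx
        rcases hsupcase x hx with h | h | h
        · have hxu : x ≠ u := fun hh => hu' (hh ▸ h)
          have hxv : x ≠ v := fun hh => hv' (hh ▸ h)
          exact Or.inl ⟨h, by rw [hφdef, Function.update_of_ne hxv,
            Function.update_of_ne hxu]⟩
        · exact Or.inr (Or.inl ⟨h, by rw [hφdef, h, Function.update_of_ne huvne,
            Function.update_self]⟩)
        · exact Or.inr (Or.inr ⟨h, by rw [hφdef, h, Function.update_self]⟩)
      refine ⟨insert b (insert a U), insert E W, φ, ψ, ?_, ?_, ?_, ?_, ?_, ?_, ?_, ?_⟩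
      · have h1 := Finset.card_insert_le b (insert a U)
        have h2 := Finset.card_insert_le a U
        omega
      · exact Finset.insert_subset_iff.mpr ⟨hEB, hWB⟩
      · have := Finset.card_insert_le E W
        omega
      · intro x hx y hy hxy
        rcases hval x hx with ⟨hx2, hx3⟩ | ⟨hx2, hx3⟩ | ⟨hx2, hx3⟩ <;>
          rcases hval y hy with ⟨hy2, hy3⟩ | ⟨hy2, hy3⟩ | ⟨hy2, hy3⟩
        · exact hinjφ hx2 hy2 (by rw [← hx3, ← hy3, hxy])
        · exfalso; apply haU; rw [← hy3, ← hxy, hx3]; exact hφU x hx2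
        · exfalso; apply hbU; rw [← hy3, ← hxy, hx3]; exact hφU x hx2
        · exfalso; apply haU; rw [← hx3, hxy, hy3]; exact hφU y hy2
        · rw [hx2, hy2]
        · exact absurd (by rw [← hx3, hxy, hy3] : a = b) hab
        · exfalso; apply hbU; rw [← hx3, hxy, hy3]; exact hφU y hy2
        · exact absurd (by rw [← hx3, hxy, hy3] : b = a) hab.symm
        · rw [hx2, hy2]
      · intro x hx
        rcases hval x hx with ⟨hx2, hx3⟩ | ⟨_, hx3⟩ | ⟨_, hx3⟩
        · rw [hx3]; exact Finset.mem_insert_of_mem (Finset.mem_insert_of_mem (hφU x hx2))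
        · rw [hx3]; exact Finset.mem_insert_of_mem (Finset.mem_insert_self _ _)
        · rw [hx3]; exact Finset.mem_insert_self _ _
      · intro e1 he1 e2 he2 heq
        by_cases h1 : e1 = s(u, v) <;> by_cases h2 : e2 = s(u, v)
        · rw [h1, h2]
        · exfalso
          have he2' : e2 ∈ F'.edgeSet := by
            rw [hins] at he2; rcases he2 with h | h; exact absurd h h2; exact h
          rw [hψdef, h1, Function.update_self, Function.update_of_ne h2] at heq
          exact hEW (heq ▸ hψW e2 he2')
        · exfalso
          have he1' : e1 ∈ F'.edgeSet := by
            rw [hins] at he1; rcases he1 with h | h; exact absurd h h1; exact h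
          rw [hψdef, h2, Function.update_self, Function.update_of_ne h1] at heq
          exact hEW (heq ▸ hψW e1 he1')
        · have he1' : e1 ∈ F'.edgeSet := by
            rw [hins] at he1; rcases he1 with h | h; exact absurd h h1; exact h
          have he2' : e2 ∈ F'.edgeSet := by
            rw [hins] at he2; rcases he2 with h | h; exact absurd h h2; exact h
          rw [hψdef, Function.update_of_ne h1, Function.update_of_ne h2] at heq
          exact hinjψ he1' he2' heq
      · intro e he
        by_cases h1 : e = s(u, v)
        · rw [hψdef, h1, Function.update_self]; exact Finset.mem_insert_self _ _
        · have he' : e ∈ F'.edgeSet := by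
            rw [hins] at he; rcases he with h | h; exact absurd h h1; exact h
          rw [hψdef, Function.update_of_ne h1]
          exact Finset.mem_insert_of_mem (hψW e he')
      · intro e he x hx
        by_cases h1 : e = s(u, v)
        · subst h1
          rw [hψdef, Function.update_self]
          rcases Sym2.mem_iff.mp hx with rfl | rfl
          · rw [hφdef, Function.update_of_ne huvne, Function.update_self]; exact haE
          · rw [hφdef, Function.update_self]; exact hbE
        · have he' : e ∈ F'.edgeSet := by
            rw [hins] at he; rcases he with h | h; exact absurd h h1; exact h
          have hxs : x ∈ F'.support := hxsupp' e he' x hx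
          have hxv : x ≠ v := fun hh => hv' (hh ▸ hxs)
          have hxu : x ≠ u := fun hh => hu' (hh ▸ hxs)
          rw [hψdef, Function.update_of_ne h1, hφdef, Function.update_of_ne hxv,
            Function.update_of_ne hxu]
          exact hcover e he' x hx

end Aux

/-- For every forest `F`, the unordered hypergraph extremal function is linear: there is a
constant `C = C(F)` such that every simple hypergraph on at most `n` vertices not containing
`F` in the unordered sense has at most `C·n` edges. -/
theorem stmt12 {V : Type*} [Fintype V] (F : SimpleGraph V) (hF : F.IsAcyclic) :
    ∃ C : ℕ, ∀ n : ℕ, ∀ H : List (Finset ℕ), HSimple H → nv H ≤ n →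
      ¬ ContainsU H F → H.length ≤ C * n := by
  classical
  set k := F.edgeSet.ncard with hk
  set D := k + 2 ^ (2 * k) + 1 with hD
  refine ⟨D + 2 ^ (2 * k) + 2 ^ (2 * k) + k + 1, ?_⟩
  intro n H hsimple hn hnc
  by_contra hlen
  push_neg at hlen
  -- H is nonempty, so n ≥ 1
  have hlen0 : 0 < H.length := lt_of_le_of_lt (Nat.zero_le _) hlen
  obtain ⟨E0, hE0⟩ : ∃ E, E ∈ H := by
    cases H with
    | nil => simp at hlen0
    | cons a t => exact ⟨a, List.mem_cons_self⟩
  obtain ⟨x0, hx0⟩ := hsimple.2 E0 hE0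
  have hn1 : 1 ≤ n := by
    have : x0 ∈ vset H := mem_vset'.mpr ⟨E0, hE0, hx0⟩
    have := Finset.card_pos.mpr ⟨x0, this⟩
    exact le_trans this hn
  set A := H.toFinset with hA
  have hAcard : A.card = H.length := List.toFinset_card_of_nodup hsimple.1
  have hAsub : A.biUnion id ⊆ vset H := by
    intro x hx
    rw [Finset.mem_biUnion] at hx
    obtain ⟨E, hE, hxE⟩ := hx
    exact mem_vset'.mpr ⟨E, List.mem_toFinset.mp hE, hxE⟩
  have hAn : (A.biUnion id).card ≤ n := le_trans (Finset.card_le_card hAsub) hn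
  obtain ⟨B, hBA, hBclean, hBdeg⟩ := cleaning D n A hAn
  have hBn : (B.biUnion id).card ≤ n := by
    refine le_trans (Finset.card_le_card ?_) hAn
    intro x hx
    rw [Finset.mem_biUnion] at hx ⊢
    obtain ⟨E, hE, hxE⟩ := hx
    exact ⟨E, hBA hE, hxE⟩
  have hBcard : 2 ^ (2 * k) * (n + 1) + k < B.card := by
    have h1 : (D + 2 ^ (2 * k) + 2 ^ (2 * k) + k + 1) * n < H.length := hlen
    have h2 : H.length ≤ B.card + D * n := hAcard ▸ hBclean
    have hexp : (D + 2 ^ (2 * k) + 2 ^ (2 * k) + k + 1) * n =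
        D * n + 2 ^ (2 * k) * n + 2 ^ (2 * k) * n + k * n + n := by ring
    have hkn : k ≤ k * n := Nat.le_mul_of_pos_right k hn1
    have hpn : 2 ^ (2 * k) ≤ 2 ^ (2 * k) * n := Nat.le_mul_of_pos_right _ hn1
    nlinarith [Nat.zero_le (2 ^ (2 * k) * n)]
  obtain ⟨U, W, φ, ψ, hU, hWB, hW, hinjφ, hφU, hinjψ, hψW, hcover⟩ :=
    embed k n B (fun a ha => hBdeg a ha) hBcard hBn k F hF le_rfl le_rfl
  -- extend φ to a global injection
  obtain ⟨g, hginj, hgφ⟩ := extend_inj F.support φ hinjφ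
  -- build the index map
  have hmemH : ∀ e ∈ F.edgeSet, ψ e ∈ H := fun e he =>
    List.mem_toFinset.mp (hBA (hWB (hψW e he)))
  set Ψ : Sym2 V → Fin H.length := fun e =>
    if he : ψ e ∈ H then ⟨List.idxOf (ψ e) H, List.idxOf_lt_length_iff.mpr he⟩
    else ⟨0, hlen0⟩ with hΨ
  have hget : ∀ e ∈ F.edgeSet, H.get (Ψ e) = ψ e := by
    intro e he
    rw [hΨ]
    simp only [hmemH e he, dif_pos]
    exact List.idxOf_get _
  apply hnc
  refine ⟨g, Ψ, hginj, ?_, ?_⟩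
  · intro e1 he1 e2 he2 heq
    have h1 := hget e1 he1
    have h2 := hget e2 he2
    rw [heq] at h1
    exact hinjψ he1 he2 (h1 ▸ h2.symm ▸ rfl)
  · intro e he x hx
    rw [hget e he, hgφ x (mem_support_of_mem_edge he hx)]
    exact hcover e he x hx
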